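/- Let T > 0, λ ≥ 0, let y : [0,T] → ℝ be a nonnegative C¹ function and g : [0,T] → ℝ a nonnegative continuous function such that y'(t) + λ y(t) ≤ g(t)·√(y(t)) for all t ∈ [0,T]. Then for all t ∈ [0,T]: √(y(t)) + (λ/2)∫₀ᵗ √(y(τ)) dτ ≤ √(y(0)) + ∫₀ᵗ g(τ) dτ. -/

import Mathlib

open Set intervalIntegral MeasureTheory

theorem nonlinear_gronwall_sqrt (T lam : ℝ) (hT : 0 < T) (hlam : 0 ≤ lam)
    (y y' g : ℝ → ℝ)
    (hy : ∀ t ∈ Set.Icc (0:ℝ) T, HasDerivAt y (y' t) t)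
    (hy' : ContinuousOn y' (Set.Icc (0:ℝ) T))
    (hynn : ∀ t ∈ Set.Icc (0:ℝ) T, 0 ≤ y t)
    (hgc : ContinuousOn g (Set.Icc (0:ℝ) T))
    (hgnn : ∀ t ∈ Set.Icc (0:ℝ) T, 0 ≤ g t)
    (hineq : ∀ t ∈ Set.Icc (0:ℝ) T, y' t + lam * y t ≤ g t * Real.sqrt (y t)) :
    ∀ t ∈ Set.Icc (0:ℝ) T,
      Real.sqrt (y t) + (lam / 2) * ∫ τ in (0:ℝ)..t, Real.sqrt (y τ)
        ≤ Real.sqrt (y 0) + ∫ τ in (0:ℝ)..t, g τ := by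
  intro t ht
  obtain ⟨ht0, htT⟩ := ht
  have hsub : Icc (0:ℝ) t ⊆ Icc 0 T := Icc_subset_Icc le_rfl htT
  have huIcc : uIcc (0:ℝ) t = Icc 0 t := uIcc_of_le ht0
  have h0T : (0:ℝ) ∈ Icc (0:ℝ) T := ⟨le_rfl, hT.le⟩
  have hyc : ContinuousOn y (Icc 0 T) := fun τ hτ =>
    ((hy τ hτ).continuousAt).continuousWithinAt
  have hsc : ContinuousOn (fun τ => Real.sqrt (y τ)) (Icc 0 T) :=
    Real.continuous_sqrt.comp_continuousOn hyc
  have hgint : IntervalIntegrable g volume 0 t := by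
    apply ContinuousOn.intervalIntegrable; rw [huIcc]; exact hgc.mono hsub
  have hsint : IntervalIntegrable (fun τ => Real.sqrt (y τ)) volume 0 t := by
    apply ContinuousOn.intervalIntegrable; rw [huIcc]; exact hsc.mono hsub
  have hCpos : (0:ℝ) < 1 + lam / 2 * T := by positivity
  refine le_of_forall_pos_le_add fun δ hδ => ?_
  set ε : ℝ := δ / (1 + lam / 2 * T) with hεdef
  have hεpos : 0 < ε := by positivity
  set z : ℝ → ℝ := fun τ => Real.sqrt (y τ + ε ^ 2) with hzdef
  have hzpos : ∀ τ ∈ Icc (0:ℝ) T, 0 < z τ := fun τ hτ =>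
    Real.sqrt_pos.mpr (by nlinarith [hynn τ hτ])
  have hzc : ContinuousOn z (Icc 0 T) :=
    Real.continuous_sqrt.comp_continuousOn (hyc.add continuousOn_const)
  have hzderiv : ∀ τ ∈ Icc (0:ℝ) T, HasDerivAt z (y' τ / (2 * z τ)) τ := fun τ hτ =>
    ((hy τ hτ).add_const (ε ^ 2)).sqrt (by nlinarith [hynn τ hτ])
  have hsz : ∀ τ ∈ Icc (0:ℝ) T, Real.sqrt (y τ) ≤ z τ := fun τ hτ =>
    Real.sqrt_le_sqrt (by nlinarith)
  have hyz : ∀ τ ∈ Icc (0:ℝ) T, (Real.sqrt (y τ) - ε) * z τ ≤ y τ := by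
    intro τ hτ
    have hs2 : Real.sqrt (y τ) ^ 2 = y τ := Real.sq_sqrt (hynn τ hτ)
    have hz2 : z τ ^ 2 = y τ + ε ^ 2 := Real.sq_sqrt (by nlinarith [hynn τ hτ])
    have hs0 : 0 ≤ Real.sqrt (y τ) := Real.sqrt_nonneg _
    have hz0 : 0 < z τ := hzpos τ hτ
    nlinarith [sq_nonneg (Real.sqrt (y τ) - ε), sq_nonneg (z τ - Real.sqrt (y τ)),
      sq_nonneg (z τ - ε), mul_nonneg hs0 hz0.le]
  -- pointwise bound on the derivative of z
  have hpt : ∀ τ ∈ Icc (0:ℝ) t,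
      y' τ / (2 * z τ) ≤ g τ / 2 - lam / 2 * (Real.sqrt (y τ) - ε) := by
    intro τ hτ
    have hτT := hsub hτ
    have hz0 : 0 < z τ := hzpos τ hτT
    rw [div_le_iff₀ (by linarith)]
    nlinarith [hineq τ hτT, mul_nonneg (hgnn τ hτT) (sub_nonneg.2 (hsz τ hτT)),
      mul_nonneg hlam (sub_nonneg.2 (hyz τ hτT))]
  -- integrability of both sides
  have hderint : IntervalIntegrable (fun τ => y' τ / (2 * z τ)) volume 0 t := by
    apply ContinuousOn.intervalIntegrable; rw [huIcc]
    exact (hy'.mono hsub).div ((continuousOn_const).mul (hzc.mono hsub))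
      (fun τ hτ => by have := hzpos τ (hsub hτ); positivity)
  have hrint : IntervalIntegrable
      (fun τ => g τ / 2 - lam / 2 * (Real.sqrt (y τ) - ε)) volume 0 t := by
    apply ContinuousOn.intervalIntegrable; rw [huIcc]
    exact ((hgc.mono hsub).div_const 2).sub
      (continuousOn_const.mul ((hsc.mono hsub).sub continuousOn_const))
  -- FTC
  have hftc : ∫ τ in (0:ℝ)..t, y' τ / (2 * z τ) = z t - z 0 :=
    integral_eq_sub_of_hasDerivAt
      (fun τ hτ => hzderiv τ (hsub (huIcc ▸ hτ))) hderint
  have hmono : ∫ τ in (0:ℝ)..t, y' τ / (2 * z τ)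
      ≤ ∫ τ in (0:ℝ)..t, (g τ / 2 - lam / 2 * (Real.sqrt (y τ) - ε)) :=
    integral_mono_on ht0 hderint hrint hpt
  have hcomp : ∫ τ in (0:ℝ)..t, (g τ / 2 - lam / 2 * (Real.sqrt (y τ) - ε))
      = (∫ τ in (0:ℝ)..t, g τ) / 2
        - lam / 2 * ((∫ τ in (0:ℝ)..t, Real.sqrt (y τ)) - ε * t) := by
    rw [intervalIntegral.integral_sub (hgint.div_const 2)
      (IntervalIntegrable.const_mul (hsint.sub intervalIntegrable_const) _),
      intervalIntegral.integral_div, intervalIntegral.integral_const_mul,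
      integral_sub hsint intervalIntegrable_const, intervalIntegral.integral_const, smul_eq_mul]
    ring
  have hz0le : z 0 ≤ Real.sqrt (y 0) + ε := by
    have h1 : y 0 + ε ^ 2 ≤ (Real.sqrt (y 0) + ε) ^ 2 := by
      nlinarith [Real.sq_sqrt (hynn 0 h0T), Real.sqrt_nonneg (y 0),
        mul_nonneg (Real.sqrt_nonneg (y 0)) hεpos.le]
    calc z 0 ≤ Real.sqrt ((Real.sqrt (y 0) + ε) ^ 2) := Real.sqrt_le_sqrt h1
      _ = Real.sqrt (y 0) + ε := Real.sqrt_sq (by positivity)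
  have hginn : 0 ≤ ∫ τ in (0:ℝ)..t, g τ :=
    integral_nonneg ht0 (fun τ hτ => hgnn τ (hsub hτ))
  have hszt : Real.sqrt (y t) ≤ z t := hsz t ⟨ht0, htT⟩
  have htmul : lam / 2 * (ε * t) ≤ lam / 2 * (ε * T) := by
    have : ε * t ≤ ε * T := mul_le_mul_of_nonneg_left htT hεpos.le
    nlinarith
  have hCε : ε + lam / 2 * (ε * T) = δ := by
    have : (1 + lam / 2 * T) * ε = δ := by
      rw [hεdef]; field_simp
    nlinarith [this]
  have key : z t - z 0 ≤ (∫ τ in (0:ℝ)..t, g τ) / 2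
      - lam / 2 * ((∫ τ in (0:ℝ)..t, Real.sqrt (y τ)) - ε * t) := by
    rw [← hftc, ← hcomp]; exact hmono
  linarith
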